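/- arXiv:0804.4576 — 2 statements merged into one kernel-verified Lean document; each statement's English description precedes it below -/
import Mathlib

section
/- For every i ∈ 𝔖, the set W_i is a closed subset of ℝ² of Lebesgue measure zero. -/
open Filter

/-- Membership in the index set 𝔖: real sequences with `1 ≤ i r < N r` and `i r / N r → 0`. -/
def SSeq (N : ℕ → ℕ) (i : ℕ → ℝ) : Prop :=
  (∀ r, 1 ≤ i r ∧ i r < N r) ∧
  Tendsto (fun r => i r / (N r : ℝ)) atTop (nhds 0)

/-- The strict relation: `i ≺ j` iff `i r > j r` for all `r` and `i r / j r → ∞`. -/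
def Prec (i j : ℕ → ℝ) : Prop :=
  (∀ r, i r > j r) ∧ Tendsto (fun r => i r / j r) atTop atTop

/-- `i ≼ j` iff `i ≺ j` or `i = j`. -/
def Preceq (i j : ℕ → ℝ) : Prop := Prec i j ∨ i = j


/-- `dSeq N r = 1/(N_1 ⋯ N_r)` (with `dSeq N 0 = 1`), indices shifted to start at 0. -/
noncomputable def dSeq (N : ℕ → ℕ) : ℕ → ℝ := fun r => (∏ k ∈ Finset.range r, (N k : ℝ))⁻¹

/-- The Euclidean norm on the plane `ℝ × ℝ`. -/
noncomputable def eNorm (v : ℝ × ℝ) : ℝ := Real.sqrt (v.1 ^ 2 + v.2 ^ 2)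

/-- The set `W_i`: the complement of the union, over all levels `r` and all centres `c` in the
lattice `C_r = d_{r-1}((1/2,1/2)+ℤ²)`, of the open squares of side `i_r d_r` centred at `c`. -/
def Wset (N : ℕ → ℕ) (i : ℕ → ℝ) : Set (ℝ × ℝ) :=
  {x | ∀ r : ℕ, ∀ z : ℤ × ℤ,
    ¬ (|x.1 - dSeq N r * (1 / 2 + (z.1 : ℝ))| < i r * dSeq N (r + 1) / 2 ∧
       |x.2 - dSeq N r * (1 / 2 + (z.2 : ℝ))| < i r * dSeq N (r + 1) / 2)}
open Filter MeasureTheory Set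
open scoped ENNReal NNReal Topology


namespace S4
variable (N : ℕ → ℕ) (i : ℕ → ℝ)

noncomputable def ell (r : ℕ) : ℝ := i r * dSeq N (r + 1)

def Gset (r : ℕ) : Set ℝ :=
  {t | ∃ z : ℤ, |t - dSeq N r * (1 / 2 + (z : ℝ))| < ell N i r / 2}

variable {N i}

lemma dpos (hN : ∀ r, 1 < N r) (r : ℕ) : 0 < dSeq N r := by
  unfold dSeq
  refine inv_pos.2 (Finset.prod_pos fun k _ => ?_)
  exact_mod_cast (hN k).trans_le' (by norm_num)

lemma dsucc (hN : ∀ r, 1 < N r) (r : ℕ) : (N r : ℝ) * dSeq N (r + 1) = dSeq N r := by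
  have h : (N r : ℝ) ≠ 0 := by
    have := hN r; positivity
  unfold dSeq
  rw [Finset.prod_range_succ, mul_inv]
  rw [mul_comm ((∏ k ∈ Finset.range r, (N k:ℝ))⁻¹), ← mul_assoc, mul_inv_cancel₀ h, one_mul]

lemma dfactor (hN : ∀ r, 1 < N r) {m r : ℕ} (h : m ≤ r) :
    dSeq N m = (∏ k ∈ Finset.Ico m r, (N k : ℝ)) * dSeq N r := by
  have hP : (∏ k ∈ Finset.Ico m r, (N k : ℝ)) ≠ 0 := by
    refine Finset.prod_ne_zero_iff.2 fun k _ => ?_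
    exact_mod_cast (Nat.lt_of_lt_of_le Nat.zero_lt_one (hN k).le).ne'
  unfold dSeq
  rw [← Finset.prod_range_mul_prod_Ico (fun k => (N k : ℝ)) h, mul_inv]
  rw [← mul_assoc, mul_comm (∏ k ∈ Finset.Ico m r, (N k:ℝ)), mul_assoc, mul_inv_cancel₀ hP, mul_one]

lemma danti (hN : ∀ r, 1 < N r) {m r : ℕ} (h : m ≤ r) : dSeq N r ≤ dSeq N m := by
  rw [dfactor hN h]
  refine le_mul_of_one_le_left (dpos hN r).le ?_
  calc (1:ℝ) = ∏ _k ∈ Finset.Ico m r, (1:ℝ) := by simp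
  _ ≤ ∏ k ∈ Finset.Ico m r, (N k : ℝ) := by
      refine Finset.prod_le_prod (fun k _ => by norm_num) fun k _ => ?_
      exact_mod_cast (hN k).le

end S4

namespace S4
variable {N : ℕ → ℕ} {i : ℕ → ℝ}

lemma ellpos (hN : ∀ r, 1 < N r) (hi : ∀ r, 1 ≤ i r ∧ i r < N r) (r : ℕ) :
    0 < ell N i r :=
  mul_pos (lt_of_lt_of_le one_pos (hi r).1) (dpos hN (r + 1))

lemma ell_lt_d (hN : ∀ r, 1 < N r) (hi : ∀ r, 1 ≤ i r ∧ i r < N r) (r : ℕ) :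
    ell N i r < dSeq N r := by
  have := mul_lt_mul_of_pos_right (hi r).2 (dpos hN (r + 1))
  rwa [dsucc hN r] at this

lemma d_le_ell (hi : ∀ r, 1 ≤ i r ∧ i r < N r) (hN : ∀ r, 1 < N r) (r : ℕ) :
    dSeq N (r + 1) ≤ ell N i r :=
  le_mul_of_one_le_left (dpos hN (r + 1)).le (hi r).1

lemma ell_eq (hN : ∀ r, 1 < N r) (r : ℕ) :
    ell N i r = (i r / N r) * dSeq N r := by
  have h : (N r : ℝ) ≠ 0 := by have := hN r; positivity
  rw [ell, ← dsucc hN r]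
  field_simp

lemma Gopen (r : ℕ) : IsOpen (Gset N i r) := by
  have : Gset N i r = ⋃ z : ℤ, Metric.ball (dSeq N r * (1 / 2 + (z : ℝ))) (ell N i r / 2) := by
    ext t
    simp [Gset, Metric.mem_ball, Real.dist_eq]
  rw [this]
  exact isOpen_iUnion fun z => Metric.isOpen_ball

lemma Gcell (hN : ∀ r, 1 < N r) (hi : ∀ r, 1 ≤ i r ∧ i r < N r) (r : ℕ) (w : ℤ) :
    Gset N i r ∩ Ico (dSeq N r * (w : ℝ)) (dSeq N r * ((w : ℝ) + 1)) =
      Ioo (dSeq N r * (1 / 2 + (w : ℝ)) - ell N i r / 2)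
        (dSeq N r * (1 / 2 + (w : ℝ)) + ell N i r / 2) := by
  have hD := dpos hN r
  have he := ellpos hN hi r
  have hlt := ell_lt_d hN hi r
  ext t
  simp only [Gset, mem_inter_iff, mem_setOf_eq, mem_Ico, mem_Ioo]
  constructor
  · rintro ⟨⟨z, hz⟩, h1, h2⟩
    rw [abs_lt] at hz
    have hc : dSeq N r * (1 / 2 + (z : ℝ)) = dSeq N r / 2 + dSeq N r * z := by ring
    have hz1 : dSeq N r * (z : ℝ) < t := by linarith [hz.1]
    have hz2 : t < dSeq N r * ((z : ℝ) + 1) := by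
      have : dSeq N r * ((z : ℝ) + 1) = dSeq N r / 2 + dSeq N r * z + dSeq N r / 2 := by ring
      linarith [hz.2]
    have hzw : z = w := by
      have hwz1 : (w : ℝ) < (z : ℝ) + 1 :=
        lt_of_mul_lt_mul_left (lt_of_le_of_lt h1 hz2) hD.le
      have hwz2 : (z : ℝ) < (w : ℝ) + 1 :=
        lt_of_mul_lt_mul_left (hz1.trans h2) hD.le
      have h1' : w < z + 1 := by exact_mod_cast hwz1
      have h2' : z < w + 1 := by exact_mod_cast hwz2
      omega
    subst hzw
    constructor <;> linarith [hz.1, hz.2]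
  · rintro ⟨h1, h2⟩
    have hc : dSeq N r * (1 / 2 + (w : ℝ)) = dSeq N r / 2 + dSeq N r * w := by ring
    have hc2 : dSeq N r * ((w : ℝ) + 1) = dSeq N r / 2 + dSeq N r * w + dSeq N r / 2 := by ring
    refine ⟨⟨w, ?_⟩, ?_, ?_⟩
    · rw [abs_lt]; constructor <;> linarith
    · linarith
    · linarith

lemma block_le (hN : ∀ r, 1 < N r) (r : ℕ) (V : Set ℝ) (e : ℝ≥0∞)
    (hV : ∀ w : ℤ, volume (V ∩ Ico (dSeq N r * (w : ℝ)) (dSeq N r * ((w : ℝ) + 1))) ≤ e) :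
    ∀ (n : ℕ) (z : ℤ), volume (V ∩ Ico (dSeq N r * (z : ℝ)) (dSeq N r * ((z : ℝ) + n))) ≤ n * e := by
  have hD := dpos hN r
  intro n
  induction n with
  | zero => intro z; simp
  | succ n ih =>
    intro z
    have h1 : dSeq N r * (z : ℝ) ≤ dSeq N r * ((z : ℝ) + n) := by nlinarith [Nat.cast_nonneg (α := ℝ) n]
    have h2 : dSeq N r * ((z : ℝ) + n) ≤ dSeq N r * ((z : ℝ) + (n + 1 : ℕ)) := by
      push_cast; nlinarith
    have key : Ico (dSeq N r * (z : ℝ)) (dSeq N r * ((z : ℝ) + (n + 1 : ℕ)))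
        = Ico (dSeq N r * (z : ℝ)) (dSeq N r * ((z : ℝ) + n))
          ∪ Ico (dSeq N r * ((z : ℝ) + n)) (dSeq N r * ((z : ℝ) + (n + 1 : ℕ))) :=
      (Ico_union_Ico_eq_Ico h1 h2).symm
    rw [key, inter_union_distrib_left]
    refine le_trans (measure_union_le _ _) ?_
    have hlast : volume (V ∩ Ico (dSeq N r * ((z : ℝ) + n)) (dSeq N r * ((z : ℝ) + (n + 1 : ℕ)))) ≤ e := by
      have hcast1 : (dSeq N r * ((z : ℝ) + n)) = dSeq N r * ((((z + n : ℤ)) : ℝ)) := by push_cast; ring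
      have hcast2 : (dSeq N r * ((z : ℝ) + (n + 1 : ℕ))) = dSeq N r * ((((z + n : ℤ)) : ℝ) + 1) := by
        push_cast; ring
      rw [hcast1, hcast2]
      exact hV (z + n)
    calc volume (V ∩ Ico (dSeq N r * (z : ℝ)) (dSeq N r * ((z : ℝ) + n)))
        + volume (V ∩ Ico (dSeq N r * ((z : ℝ) + n)) (dSeq N r * ((z : ℝ) + (n + 1 : ℕ))))
        ≤ n * e + e := add_le_add (ih z) hlast
      _ = (n + 1 : ℕ) * e := by push_cast; rw [add_mul, one_mul]

lemma Gblock (hN : ∀ r, 1 < N r) (hi : ∀ r, 1 ≤ i r ∧ i r < N r) (r : ℕ) :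
    ∀ (n : ℕ) (z : ℤ), volume (Gset N i r ∩ Ico (dSeq N r * (z : ℝ)) (dSeq N r * ((z : ℝ) + n)))
      = n * ENNReal.ofReal (ell N i r) := by
  have hD := dpos hN r
  intro n
  induction n with
  | zero => intro z; simp
  | succ n ih =>
    intro z
    have h1 : dSeq N r * (z : ℝ) ≤ dSeq N r * ((z : ℝ) + n) := by nlinarith [Nat.cast_nonneg (α := ℝ) n]
    have h2 : dSeq N r * ((z : ℝ) + n) ≤ dSeq N r * ((z : ℝ) + (n + 1 : ℕ)) := by
      push_cast; nlinarith
    have key : Ico (dSeq N r * (z : ℝ)) (dSeq N r * ((z : ℝ) + (n + 1 : ℕ)))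
        = Ico (dSeq N r * (z : ℝ)) (dSeq N r * ((z : ℝ) + n))
          ∪ Ico (dSeq N r * ((z : ℝ) + n)) (dSeq N r * ((z : ℝ) + (n + 1 : ℕ))) :=
      (Ico_union_Ico_eq_Ico h1 h2).symm
    rw [key, inter_union_distrib_left, measure_union ?dis ?meas]
    case dis =>
      exact (Set.Ico_disjoint_Ico_same).mono inter_subset_right inter_subset_right
    case meas =>
      exact ((Gopen r).measurableSet).inter measurableSet_Ico
    have hlast : volume (Gset N i r ∩ Ico (dSeq N r * ((z : ℝ) + n)) (dSeq N r * ((z : ℝ) + (n + 1 : ℕ))))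
        = ENNReal.ofReal (ell N i r) := by
      have hcast1 : (dSeq N r * ((z : ℝ) + n)) = dSeq N r * ((((z + n : ℤ)) : ℝ)) := by push_cast; ring
      have hcast2 : (dSeq N r * ((z : ℝ) + (n + 1 : ℕ))) = dSeq N r * ((((z + n : ℤ)) : ℝ) + 1) := by
        push_cast; ring
      rw [hcast1, hcast2, Gcell hN hi r (z + n), Real.volume_Ioo]
      congr 1
      ring
    rw [ih z, hlast]
    push_cast
    rw [add_mul, one_mul]

end S4

namespace S4
variable {N : ℕ → ℕ} {i : ℕ → ℝ}

def Icell (N : ℕ → ℕ) (m : ℕ) (a : ℤ) : Set ℝ :=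
  Ico (dSeq N m * (a : ℝ)) (dSeq N m * ((a : ℝ) + 1))

/-- The number of level-`r` cells in a level-`m` cell. -/
def Knum (N : ℕ → ℕ) (m r : ℕ) : ℕ := ∏ k ∈ Finset.Ico m r, N k

lemma Knum_cast (m r : ℕ) : ((Knum N m r : ℕ) : ℝ) = ∏ k ∈ Finset.Ico m r, (N k : ℝ) := by
  rw [Knum]; push_cast; rfl

lemma Icell_decomp (hN : ∀ r, 1 < N r) {m r : ℕ} (h : m ≤ r) (a : ℤ) :
    Icell N m a = Ico (dSeq N r * (((Knum N m r : ℤ) * a : ℤ) : ℝ))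
      (dSeq N r * ((((Knum N m r : ℤ) * a : ℤ) : ℝ) + (Knum N m r : ℕ))) := by
  have hd := dfactor hN h
  rw [Icell, hd, ← Knum_cast]
  congr 1 <;> push_cast <;> ring

lemma Kell (hN : ∀ r, 1 < N r) {m r : ℕ} (h : m ≤ r) :
    (Knum N m r : ℝ) * ell N i r = (i r / N r) * dSeq N m := by
  rw [ell_eq hN, dfactor hN h, ← Knum_cast]
  ring

lemma Gsub (hN : ∀ r, 1 < N r) (hi : ∀ r, 1 ≤ i r ∧ i r < N r) {m r : ℕ} (h : m ≤ r) (a : ℤ) :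
    volume (Gset N i r ∩ Icell N m a) = ENNReal.ofReal ((i r / N r) * dSeq N m) := by
  rw [Icell_decomp hN h a, Gblock hN hi r (Knum N m r) ((Knum N m r : ℤ) * a)]
  rw [← Kell hN h (i := i), ← ENNReal.ofReal_natCast (Knum N m r),
    ← ENNReal.ofReal_mul (by positivity)]

lemma Goverlap (hN : ∀ r, 1 < N r) (hi : ∀ r, 1 ≤ i r ∧ i r < N r) (s : ℕ) {a b : ℝ}
    (hab : a ≤ b) :
    volume (Gset N i s ∩ Ioo a b) ≤
      ENNReal.ofReal ((i s / N s) * (b - a) + 2 * ell N i s) := by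
  have hD := dpos hN s
  have he := ellpos hN hi s
  set z : ℤ := ⌊a / dSeq N s⌋ with hz
  set n : ℕ := (⌈(b - a) / dSeq N s⌉).toNat + 1 with hn
  have hsub : Ioo a b ⊆ Ico (dSeq N s * (z : ℝ)) (dSeq N s * ((z : ℝ) + n)) := by
    have hl : dSeq N s * (z : ℝ) ≤ a := by
      rw [mul_comm]
      calc (z : ℝ) * dSeq N s ≤ (a / dSeq N s) * dSeq N s :=
        mul_le_mul_of_nonneg_right (Int.floor_le _) hD.le
      _ = a := div_mul_cancel₀ a hD.ne'
    have hr : b ≤ dSeq N s * ((z : ℝ) + n) := by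
      have h1 : a / dSeq N s - 1 < (z : ℝ) := Int.sub_one_lt_floor _
      have h2 : (b - a) / dSeq N s + 1 ≤ (n : ℝ) := by
        rw [hn]
        push_cast
        have : ((b - a) / dSeq N s) ≤ ((⌈(b - a) / dSeq N s⌉ : ℤ) : ℝ) := Int.le_ceil _
        have h3 : ((⌈(b - a) / dSeq N s⌉ : ℤ) : ℝ) ≤ ((⌈(b - a) / dSeq N s⌉.toNat : ℤ) : ℝ) := by
          exact_mod_cast Int.self_le_toNat _
        push_cast at h3
        linarith
      have : b / dSeq N s < (z : ℝ) + n := by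
        have hba : b / dSeq N s = a / dSeq N s + (b - a) / dSeq N s := by
          field_simp
          ring
        linarith
      have := mul_lt_mul_of_pos_left this hD
      rw [mul_div_cancel₀ _ hD.ne'] at this
      exact this.le
    intro t ht
    exact ⟨hl.trans ht.1.le, lt_of_lt_of_le ht.2 hr⟩
  have hcell : ∀ w : ℤ,
      volume (Gset N i s ∩ Ico (dSeq N s * (w : ℝ)) (dSeq N s * ((w : ℝ) + 1)))
        ≤ ENNReal.ofReal (ell N i s) := fun w => by
    rw [Gcell hN hi s w, Real.volume_Ioo]
    exact ENNReal.ofReal_le_ofReal (by ring_nf; exact le_rfl)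
  calc volume (Gset N i s ∩ Ioo a b)
      ≤ volume (Gset N i s ∩ Ico (dSeq N s * (z : ℝ)) (dSeq N s * ((z : ℝ) + n))) :=
        measure_mono (inter_subset_inter_right _ hsub)
    _ ≤ n * ENNReal.ofReal (ell N i s) := block_le hN s _ _ hcell n z
    _ = ENNReal.ofReal (n * ell N i s) := by
        rw [← ENNReal.ofReal_natCast n, ← ENNReal.ofReal_mul (Nat.cast_nonneg n)]
    _ ≤ ENNReal.ofReal ((i s / N s) * (b - a) + 2 * ell N i s) := by
        apply ENNReal.ofReal_le_ofReal
        have hn2 : (n : ℝ) ≤ (b - a) / dSeq N s + 2 := by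
          rw [hn]
          push_cast
          have h0 : (0:ℝ) ≤ (b - a) / dSeq N s := div_nonneg (by linarith) hD.le
          have h1 : (⌈(b - a) / dSeq N s⌉ : ℝ) < (b - a) / dSeq N s + 1 := Int.ceil_lt_add_one _
          have h2 : ((⌈(b - a) / dSeq N s⌉.toNat : ℤ) : ℝ) = ((⌈(b - a) / dSeq N s⌉ : ℤ) : ℝ) := by
            exact_mod_cast Int.toNat_of_nonneg (Int.ceil_nonneg h0)
          push_cast at h2
          linarith
        have hes : ell N i s = (i s / N s) * dSeq N s := ell_eq hN s
        calc (n : ℝ) * ell N i s ≤ ((b - a) / dSeq N s + 2) * ell N i s :=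
          mul_le_mul_of_nonneg_right hn2 he.le
        _ = (i s / N s) * (b - a) + 2 * ell N i s := by
            rw [hes]
            have hdc : (b - a) / dSeq N s * dSeq N s = b - a := div_mul_cancel₀ _ hD.ne'
            linear_combination (i s / (N s : ℝ)) * hdc

lemma Goffdiag (hN : ∀ r, 1 < N r) (hi : ∀ r, 1 ≤ i r ∧ i r < N r) {m r s : ℕ}
    (hmr : m ≤ r) (hrs : r < s) (a : ℤ) :
    volume (Gset N i r ∩ Gset N i s ∩ Icell N m a) ≤
      ENNReal.ofReal (3 * ((i r / N r) * (i s / N s)) * dSeq N m) := by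
  have hD := dpos hN r
  have he := ellpos hN hi r
  have hes := ellpos hN hi s
  have hcell : ∀ w : ℤ,
      volume ((Gset N i r ∩ Gset N i s) ∩ Ico (dSeq N r * (w : ℝ)) (dSeq N r * ((w : ℝ) + 1)))
        ≤ ENNReal.ofReal (3 * (i s / N s) * ell N i r) := by
    intro w
    have hre : (Gset N i r ∩ Gset N i s) ∩ Ico (dSeq N r * (w : ℝ)) (dSeq N r * ((w : ℝ) + 1))
        = Gset N i s ∩ (Gset N i r ∩ Ico (dSeq N r * (w : ℝ)) (dSeq N r * ((w : ℝ) + 1))) := by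
      ext t; simp only [mem_inter_iff]; tauto
    rw [hre, Gcell hN hi r w]
    have hab : dSeq N r * (1 / 2 + (w : ℝ)) - ell N i r / 2
        ≤ dSeq N r * (1 / 2 + (w : ℝ)) + ell N i r / 2 := by linarith
    refine le_trans (Goverlap hN hi s hab) (ENNReal.ofReal_le_ofReal ?_)
    have hlen : (dSeq N r * (1 / 2 + (w : ℝ)) + ell N i r / 2)
        - (dSeq N r * (1 / 2 + (w : ℝ)) - ell N i r / 2) = ell N i r := by ring
    rw [hlen]
    have hq : 0 ≤ i s / N s := by
      have h1 := (hi s).1; have h2 := hN s; positivity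
    have hde : ell N i s ≤ (i s / N s) * ell N i r := by
      rw [ell_eq hN s]
      refine mul_le_mul_of_nonneg_left ?_ hq
      calc dSeq N s ≤ dSeq N (r + 1) := danti hN hrs
      _ ≤ ell N i r := d_le_ell hi hN r
    linarith
  calc volume (Gset N i r ∩ Gset N i s ∩ Icell N m a)
      ≤ (Knum N m r : ℕ) * ENNReal.ofReal (3 * (i s / N s) * ell N i r) := by
        rw [Icell_decomp hN hmr a]
        exact block_le hN r _ _ hcell (Knum N m r) _
    _ = ENNReal.ofReal ((Knum N m r : ℝ) * (3 * (i s / N s) * ell N i r)) := by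
        rw [← ENNReal.ofReal_natCast (Knum N m r), ← ENNReal.ofReal_mul (by positivity)]
    _ ≤ ENNReal.ofReal (3 * ((i r / N r) * (i s / N s)) * dSeq N m) := by
        apply le_of_eq
        congr 1
        have := Kell (i := i) hN hmr
        linear_combination 3 * (i s / (N s : ℝ)) * this

end S4


namespace S4
variable {N : ℕ → ℕ} {i : ℕ → ℝ}

def Aset (N : ℕ → ℕ) (i : ℕ → ℝ) (r : ℕ) : Set (ℝ × ℝ) := Gset N i r ×ˢ Gset N i r

def Qcell (N : ℕ → ℕ) (m : ℕ) (a : ℤ × ℤ) : Set (ℝ × ℝ) := Icell N m a.1 ×ˢ Icell N m a.2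

lemma Wcompl : (Wset N i)ᶜ = ⋃ r, Aset N i r := by
  ext x
  simp only [Wset, Aset, Gset, ell, mem_compl_iff, mem_setOf_eq, mem_iUnion, Set.mem_prod,
    not_forall, not_not]
  constructor
  · rintro ⟨r, z, h1, h2⟩
    exact ⟨r, ⟨z.1, h1⟩, ⟨z.2, h2⟩⟩
  · rintro ⟨r, ⟨z1, h1⟩, ⟨z2, h2⟩⟩
    exact ⟨r, (z1, z2), h1, h2⟩

lemma Ameas (r : ℕ) : MeasurableSet (Aset N i r) :=
  ((Gopen (N := N) (i := i) r).measurableSet).prod (Gopen r).measurableSet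

lemma Qmeas (m : ℕ) (a : ℤ × ℤ) : MeasurableSet (Qcell N m a) :=
  (measurableSet_Ico).prod measurableSet_Ico

lemma Adiag (hN : ∀ r, 1 < N r) (hi : ∀ r, 1 ≤ i r ∧ i r < N r) {m r : ℕ} (h : m ≤ r)
    (a : ℤ × ℤ) :
    volume (Aset N i r ∩ Qcell N m a) = ENNReal.ofReal ((i r / N r) ^ 2 * dSeq N m ^ 2) := by
  have h1 : (0:ℝ) ≤ i r := le_trans zero_le_one (hi r).1
  have h2 : (0:ℝ) < N r := by exact_mod_cast (Nat.lt_of_lt_of_le Nat.zero_lt_one (hN r).le)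
  have h3 := dpos hN m
  rw [Aset, Qcell, Set.prod_inter_prod, Measure.volume_eq_prod, Measure.prod_prod,
    Gsub hN hi h a.1, Gsub hN hi h a.2, ← ENNReal.ofReal_mul (by positivity)]
  congr 1
  ring

lemma Aoffdiag (hN : ∀ r, 1 < N r) (hi : ∀ r, 1 ≤ i r ∧ i r < N r) {m r s : ℕ}
    (hmr : m ≤ r) (hms : m ≤ s) (hrs : r ≠ s) (a : ℤ × ℤ) :
    volume ((Aset N i r ∩ Qcell N m a) ∩ (Aset N i s ∩ Qcell N m a)) ≤
      ENNReal.ofReal (9 * ((i r / N r) ^ 2 * (i s / N s) ^ 2) * dSeq N m ^ 2) := by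
  have key : ∀ u v : ℕ, m ≤ u → u < v →
      volume ((Aset N i u ∩ Qcell N m a) ∩ (Aset N i v ∩ Qcell N m a)) ≤
      ENNReal.ofReal (9 * ((i u / N u) ^ 2 * (i v / N v) ^ 2) * dSeq N m ^ 2) := by
    intro u v hmu huv
    have hre : (Aset N i u ∩ Qcell N m a) ∩ (Aset N i v ∩ Qcell N m a)
        = (Gset N i u ∩ Gset N i v ∩ Icell N m a.1) ×ˢ (Gset N i u ∩ Gset N i v ∩ Icell N m a.2) := by
      rw [Aset, Aset, Qcell, Set.prod_inter_prod, Set.prod_inter_prod, Set.prod_inter_prod]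
      congr 1 <;> · ext t; simp only [mem_inter_iff]; tauto
    rw [hre, Measure.volume_eq_prod, Measure.prod_prod]
    calc volume (Gset N i u ∩ Gset N i v ∩ Icell N m a.1)
          * volume (Gset N i u ∩ Gset N i v ∩ Icell N m a.2)
        ≤ ENNReal.ofReal (3 * ((i u / N u) * (i v / N v)) * dSeq N m)
          * ENNReal.ofReal (3 * ((i u / N u) * (i v / N v)) * dSeq N m) :=
          mul_le_mul' (Goffdiag hN hi hmu huv a.1) (Goffdiag hN hi hmu huv a.2)
      _ = ENNReal.ofReal (9 * ((i u / N u) ^ 2 * (i v / N v) ^ 2) * dSeq N m ^ 2) := by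
          have h1 : (0:ℝ) ≤ i u := le_trans zero_le_one (hi u).1
          have h1' : (0:ℝ) ≤ i v := le_trans zero_le_one (hi v).1
          have h2 : (0:ℝ) < N u := by exact_mod_cast (Nat.lt_of_lt_of_le Nat.zero_lt_one (hN u).le)
          have h2' : (0:ℝ) < N v := by exact_mod_cast (Nat.lt_of_lt_of_le Nat.zero_lt_one (hN v).le)
          have h3 := dpos hN m
          rw [← ENNReal.ofReal_mul (by positivity)]
          congr 1
          ring
  rcases lt_or_gt_of_ne hrs with h | h
  · exact key r s hmr h
  · have := key s r hms h
    rw [inter_comm] at this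
    refine this.trans (le_of_eq ?_)
    congr 1
    ring

end S4
/-- Chung–Erdős: for finitely many measurable sets,
`(∑ μ Aᵣ)² ≤ (∑∑ μ(Aᵣ∩Aₛ)) * μ(⋃ Aᵣ)`. -/
lemma chung_erdos {α : Type*} [MeasurableSpace α] (μ : Measure α) {ι : Type*} (F : Finset ι)
    (A : ι → Set α) (hA : ∀ r ∈ F, MeasurableSet (A r)) :
    (∑ r ∈ F, μ (A r)) ^ 2 ≤
      (∑ r ∈ F, ∑ s ∈ F, μ (A r ∩ A s)) * μ (⋃ r ∈ F, A r) := by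
  classical
  set f : α → ℝ≥0∞ := fun x => ∑ r ∈ F, (A r).indicator (fun _ => (1:ℝ≥0∞)) x with hf
  set U : Set α := ⋃ r ∈ F, A r with hU
  have hUmeas : MeasurableSet U := Finset.measurableSet_biUnion F hA
  have hfmeas : Measurable f := by
    refine Finset.measurable_sum F fun r hr => ?_
    exact measurable_const.indicator (hA r hr)
  have hgmeas : Measurable (U.indicator (fun _ => (1:ℝ≥0∞))) :=
    measurable_const.indicator hUmeas
  have hfg : ∀ x, f x = f x * U.indicator (fun _ => (1:ℝ≥0∞)) x := by
    intro x
    by_cases hx : x ∈ U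
    · rw [indicator_of_mem hx, mul_one]
    · have : f x = 0 := by
        refine Finset.sum_eq_zero fun r hr => ?_
        refine indicator_of_notMem (fun hmem => hx ?_) _
        exact mem_biUnion hr hmem
      rw [this, zero_mul]
  have hint1 : ∫⁻ x, f x ∂μ = ∑ r ∈ F, μ (A r) := by
    rw [hf]
    rw [lintegral_finset_sum _ fun r hr => measurable_const.indicator (hA r hr)]
    refine Finset.sum_congr rfl fun r hr => ?_
    rw [lintegral_indicator_const (hA r hr), one_mul]
  have hint2 : ∫⁻ x, f x ^ (2:ℝ) ∂μ = ∑ r ∈ F, ∑ s ∈ F, μ (A r ∩ A s) := by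
    have hsq : (fun x => f x ^ (2:ℝ))
        = fun x => ∑ r ∈ F, ∑ s ∈ F, (A r ∩ A s).indicator (fun _ => (1:ℝ≥0∞)) x := by
      funext x
      rw [show ((2:ℝ) = ((2:ℕ):ℝ)) by norm_num, ENNReal.rpow_natCast, sq, hf,
        Finset.sum_mul_sum]
      refine Finset.sum_congr rfl fun r _ => Finset.sum_congr rfl fun s _ => ?_
      rw [← Set.inter_indicator_mul]
      simp
    rw [hsq]
    rw [lintegral_finset_sum _ fun r hr => Finset.measurable_sum F fun s hs =>
      measurable_const.indicator ((hA r hr).inter (hA s hs))]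
    refine Finset.sum_congr rfl fun r hr => ?_
    rw [lintegral_finset_sum _ fun s hs => measurable_const.indicator ((hA r hr).inter (hA s hs))]
    refine Finset.sum_congr rfl fun s hs => ?_
    rw [lintegral_indicator_const ((hA r hr).inter (hA s hs)), one_mul]
  have hint3 : ∫⁻ x, (U.indicator (fun _ => (1:ℝ≥0∞)) x) ^ (2:ℝ) ∂μ = μ U := by
    have : (fun x => (U.indicator (fun _ => (1:ℝ≥0∞)) x) ^ (2:ℝ))
        = U.indicator (fun _ => (1:ℝ≥0∞)) := by
      funext x
      by_cases hx : x ∈ U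
      · rw [indicator_of_mem hx, ENNReal.one_rpow]
      · rw [indicator_of_notMem hx, ENNReal.zero_rpow_of_pos (by norm_num)]
    rw [this, lintegral_indicator_const hUmeas, one_mul]
  have hconj : Real.HolderConjugate 2 2 := Real.HolderConjugate.two_two
  have holder := ENNReal.lintegral_mul_le_Lp_mul_Lq μ hconj hfmeas.aemeasurable
    hgmeas.aemeasurable
  rw [show (fun x => (f * U.indicator (fun _ => (1:ℝ≥0∞))) x) = f from (funext fun x => (hfg x).symm)] at holder
  -- holder : ∫⁻ f ≤ (∫⁻ f^2)^(1/2) * (∫⁻ g^2)^(1/2)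
  have h2 := ENNReal.rpow_le_rpow holder (by norm_num : (0:ℝ) ≤ 2)
  rw [ENNReal.mul_rpow_of_nonneg _ _ (by norm_num : (0:ℝ) ≤ 2), ← ENNReal.rpow_mul,
    ← ENNReal.rpow_mul, show ((1:ℝ)/2*2) = 1 by norm_num, ENNReal.rpow_one, ENNReal.rpow_one,
    hint2, hint3] at h2
  calc (∑ r ∈ F, μ (A r)) ^ 2 = (∫⁻ x, f x ∂μ) ^ ((2:ℕ):ℝ) := by
        rw [hint1, ENNReal.rpow_natCast]
    _ ≤ _ := by exact_mod_cast h2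

namespace S4
variable {N : ℕ → ℕ} {i : ℕ → ℝ}

/-- In every grid cell at every level, a fixed proportion of the measure is removed. -/
lemma cell_bound (hN : ∀ r, 1 < N r) (hi : ∀ r, 1 ≤ i r ∧ i r < N r)
    (hdiv : ¬ Summable (fun r => 1 / (N r : ℝ) ^ 2)) (m : ℕ) (a : ℤ × ℤ) :
    ENNReal.ofReal (dSeq N m ^ 2 / 10) ≤ volume ((Wset N i)ᶜ ∩ Qcell N m a) := by
  classical
  have hq0 : ∀ r, (0:ℝ) < i r / N r := by
    intro r
    have h1 : (0:ℝ) < i r := lt_of_lt_of_le one_pos (hi r).1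
    have h2 : (0:ℝ) < N r := by exact_mod_cast Nat.lt_of_lt_of_le Nat.zero_lt_one (hN r).le
    positivity
  -- choose R with ∑_{r ∈ [m, R)} (i r / N r)^2 ≥ 1
  obtain ⟨R, hmR, hT1⟩ : ∃ R, m ≤ R ∧ 1 ≤ ∑ r ∈ Finset.Ico m R, (i r / N r) ^ 2 := by
    have hnn : ∀ r, (0:ℝ) ≤ 1 / (N r : ℝ) ^ 2 := fun r => by positivity
    have htend := (not_summable_iff_tendsto_nat_atTop_of_nonneg hnn).1 hdiv
    have hev := (htend.eventually_ge_atTop ((∑ r ∈ Finset.range m, 1 / (N r : ℝ) ^ 2) + 1)).and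
      (eventually_ge_atTop m)
    obtain ⟨R, hR1, hR2⟩ := hev.exists
    refine ⟨R, hR2, ?_⟩
    have hIco : ∑ r ∈ Finset.Ico m R, 1 / (N r : ℝ) ^ 2
        = ∑ r ∈ Finset.range R, 1 / (N r : ℝ) ^ 2 - ∑ r ∈ Finset.range m, 1 / (N r : ℝ) ^ 2 :=
      Finset.sum_Ico_eq_sub _ hR2
    have hle : ∑ r ∈ Finset.Ico m R, 1 / (N r : ℝ) ^ 2 ≤ ∑ r ∈ Finset.Ico m R, (i r / N r) ^ 2 := by
      refine Finset.sum_le_sum fun r _ => ?_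
      have h1 : (1:ℝ) ≤ i r := (hi r).1
      have h2 : (0:ℝ) < N r := by exact_mod_cast Nat.lt_of_lt_of_le Nat.zero_lt_one (hN r).le
      rw [one_div, ← inv_pow]
      refine pow_le_pow_left₀ (by positivity) ?_ 2
      rw [inv_eq_one_div, div_le_div_iff₀ h2 h2]
      nlinarith
    linarith
  set F := Finset.Ico m R with hF
  set T : ℝ := ∑ r ∈ F, (i r / N r) ^ 2 with hTdef
  have hT0 : (0:ℝ) < T := lt_of_lt_of_le one_pos hT1
  have hD := dpos hN m
  have hCE := chung_erdos volume F (fun r => Aset N i r ∩ Qcell N m a)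
    (fun r _ => (Ameas r).inter (Qmeas m a))
  have hS1 : ∑ r ∈ F, volume (Aset N i r ∩ Qcell N m a)
      = ENNReal.ofReal (T * dSeq N m ^ 2) := by
    have hc : ∀ r ∈ F, volume (Aset N i r ∩ Qcell N m a)
        = ENNReal.ofReal ((i r / N r) ^ 2 * dSeq N m ^ 2) := fun r hr =>
      Adiag hN hi (Finset.mem_Ico.1 hr).1 a
    rw [Finset.sum_congr rfl hc, ← ENNReal.ofReal_sum_of_nonneg (fun r _ => by positivity),
      hTdef, Finset.sum_mul]
  have hS2 : ∑ r ∈ F, ∑ s ∈ F,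
        volume ((Aset N i r ∩ Qcell N m a) ∩ (Aset N i s ∩ Qcell N m a))
      ≤ ENNReal.ofReal ((T + 9 * T ^ 2) * dSeq N m ^ 2) := by
    have hrow : ∀ r ∈ F, ∑ s ∈ F,
        volume ((Aset N i r ∩ Qcell N m a) ∩ (Aset N i s ∩ Qcell N m a))
        ≤ ENNReal.ofReal ((i r / N r) ^ 2 * dSeq N m ^ 2)
          + ∑ s ∈ F, ENNReal.ofReal (9 * ((i r / N r) ^ 2 * (i s / N s) ^ 2) * dSeq N m ^ 2) := by
      intro r hr
      have hmr : m ≤ r := (Finset.mem_Ico.1 hr).1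
      rw [← Finset.add_sum_erase F _ hr]
      refine add_le_add ?_ ?_
      · rw [inter_self, Adiag hN hi hmr a]
      · refine le_trans (Finset.sum_le_sum fun s hs => ?_)
          (Finset.sum_le_sum_of_subset (Finset.erase_subset r F))
        have hms : m ≤ s := (Finset.mem_Ico.1 (Finset.mem_of_mem_erase hs)).1
        exact Aoffdiag hN hi hmr hms (fun h => (Finset.ne_of_mem_erase hs) h.symm) a
    calc ∑ r ∈ F, ∑ s ∈ F,
          volume ((Aset N i r ∩ Qcell N m a) ∩ (Aset N i s ∩ Qcell N m a))
        ≤ ∑ r ∈ F, (ENNReal.ofReal ((i r / N r) ^ 2 * dSeq N m ^ 2)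
          + ∑ s ∈ F, ENNReal.ofReal (9 * ((i r / N r) ^ 2 * (i s / N s) ^ 2) * dSeq N m ^ 2)) :=
        Finset.sum_le_sum hrow
      _ = ENNReal.ofReal ((T + 9 * T ^ 2) * dSeq N m ^ 2) := by
        rw [Finset.sum_add_distrib]
        have e1 : ∑ r ∈ F, ENNReal.ofReal ((i r / N r) ^ 2 * dSeq N m ^ 2)
            = ENNReal.ofReal (T * dSeq N m ^ 2) := by
          rw [← ENNReal.ofReal_sum_of_nonneg (fun r _ => by positivity), hTdef, Finset.sum_mul]
        have e2 : ∑ r ∈ F, ∑ s ∈ F,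
            ENNReal.ofReal (9 * ((i r / N r) ^ 2 * (i s / N s) ^ 2) * dSeq N m ^ 2)
            = ENNReal.ofReal (9 * T ^ 2 * dSeq N m ^ 2) := by
          have : ∀ r ∈ F, ∑ s ∈ F,
              ENNReal.ofReal (9 * ((i r / N r) ^ 2 * (i s / N s) ^ 2) * dSeq N m ^ 2)
              = ENNReal.ofReal (∑ s ∈ F, 9 * ((i r / N r) ^ 2 * (i s / N s) ^ 2) * dSeq N m ^ 2) :=
            fun r _ => (ENNReal.ofReal_sum_of_nonneg (fun s _ => by positivity)).symm
          rw [Finset.sum_congr rfl this,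
            ← ENNReal.ofReal_sum_of_nonneg (fun r _ => by positivity)]
          congr 1
          have hX : ∀ r ∈ F, ∑ s ∈ F, 9 * ((i r / N r) ^ 2 * (i s / N s) ^ 2) * dSeq N m ^ 2
              = 9 * (i r / N r) ^ 2 * T * dSeq N m ^ 2 := by
            intro r _
            have hterm : ∀ s ∈ F, 9 * ((i r / N r) ^ 2 * (i s / N s) ^ 2) * dSeq N m ^ 2
                = (9 * (i r / N r) ^ 2 * dSeq N m ^ 2) * (i s / N s) ^ 2 := fun s _ => by ring
            rw [Finset.sum_congr rfl hterm, ← Finset.mul_sum, ← hTdef]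
            ring
          rw [Finset.sum_congr rfl hX]
          have hterm2 : ∀ r ∈ F, 9 * (i r / N r) ^ 2 * T * dSeq N m ^ 2
              = (9 * T * dSeq N m ^ 2) * (i r / N r) ^ 2 := fun r _ => by ring
          rw [Finset.sum_congr rfl hterm2, ← Finset.mul_sum, ← hTdef]
          ring
        rw [e1, e2, ← ENNReal.ofReal_add (by positivity) (by positivity)]
        congr 1
        ring
  -- combine
  set U : Set (ℝ × ℝ) := ⋃ r ∈ F, (Aset N i r ∩ Qcell N m a) with hU
  have hUW : U ⊆ (Wset N i)ᶜ ∩ Qcell N m a := by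
    refine Set.iUnion₂_subset fun r _ => ?_
    refine Set.inter_subset_inter ?_ le_rfl
    rw [Wcompl]
    exact Set.subset_iUnion (fun r => Aset N i r) r
  rw [hS1] at hCE
  have hCE2 : ENNReal.ofReal ((T * dSeq N m ^ 2) ^ 2)
      ≤ ENNReal.ofReal ((T + 9 * T ^ 2) * dSeq N m ^ 2) * volume U := by
    rw [ENNReal.ofReal_pow (by positivity)]
    exact hCE.trans (mul_le_mul_left hS2 _)
  have hbpos : (0:ℝ) < (T + 9 * T ^ 2) * dSeq N m ^ 2 := by positivity
  have hb0 : ENNReal.ofReal ((T + 9 * T ^ 2) * dSeq N m ^ 2) ≠ 0 := by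
    rw [Ne, ENNReal.ofReal_eq_zero]
    linarith
  have hbt : ENNReal.ofReal ((T + 9 * T ^ 2) * dSeq N m ^ 2) ≠ ⊤ := ENNReal.ofReal_ne_top
  have hdivle : ENNReal.ofReal ((T * dSeq N m ^ 2) ^ 2)
      / ENNReal.ofReal ((T + 9 * T ^ 2) * dSeq N m ^ 2) ≤ volume U := by
    rw [ENNReal.div_le_iff_le_mul (Or.inl hb0) (Or.inl hbt)]
    exact hCE2.trans_eq (mul_comm _ _)
  have hfinal : ENNReal.ofReal (dSeq N m ^ 2 / 10)
      ≤ ENNReal.ofReal ((T * dSeq N m ^ 2) ^ 2)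
        / ENNReal.ofReal ((T + 9 * T ^ 2) * dSeq N m ^ 2) := by
    rw [← ENNReal.ofReal_div_of_pos hbpos]
    apply ENNReal.ofReal_le_ofReal
    rw [div_le_div_iff₀ (by norm_num) hbpos]
    nlinarith [sq_nonneg (dSeq N m), sq_nonneg T, mul_pos hD hD]
  calc ENNReal.ofReal (dSeq N m ^ 2 / 10) ≤ _ := hfinal
    _ ≤ volume U := hdivle
    _ ≤ volume ((Wset N i)ᶜ ∩ Qcell N m a) := measure_mono hUW

end S4

namespace S4
variable {N : ℕ → ℕ} {i : ℕ → ℝ}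

lemma Wclosed : IsClosed (Wset N i) := by
  have hW : Wset N i = ⋂ (r : ℕ), ⋂ (z : ℤ × ℤ),
      ({x : ℝ × ℝ | |x.1 - dSeq N r * (1 / 2 + (z.1 : ℝ))| < i r * dSeq N (r + 1) / 2} ∩
       {x : ℝ × ℝ | |x.2 - dSeq N r * (1 / 2 + (z.2 : ℝ))| < i r * dSeq N (r + 1) / 2})ᶜ := by
    ext x
    simp only [Wset, mem_setOf_eq, mem_iInter, mem_compl_iff, mem_inter_iff]
  rw [hW]
  refine isClosed_iInter fun r => isClosed_iInter fun z => IsOpen.isClosed_compl ?_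
  refine IsOpen.inter ?_ ?_
  · exact isOpen_lt ((continuous_fst.sub continuous_const).abs) continuous_const
  · exact isOpen_lt ((continuous_snd.sub continuous_const).abs) continuous_const

lemma Wmeas : MeasurableSet (Wset N i) := (Wclosed).measurableSet

lemma dtend (hN : ∀ r, 1 < N r) : Tendsto (dSeq N) atTop (𝓝[>] (0:ℝ)) := by
  have hb : ∀ m, dSeq N m ≤ ((2:ℝ)⁻¹) ^ m := by
    intro m
    have hprod : (2:ℝ) ^ m ≤ ∏ k ∈ Finset.range m, (N k : ℝ) := by
      calc (2:ℝ) ^ m = ∏ _k ∈ Finset.range m, (2:ℝ) := by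
            rw [Finset.prod_const, Finset.card_range]
        _ ≤ ∏ k ∈ Finset.range m, (N k : ℝ) := by
            refine Finset.prod_le_prod (fun k _ => by norm_num) fun k _ => ?_
            exact_mod_cast hN k
    rw [inv_pow]
    exact inv_anti₀ (by positivity) hprod
  have h2 : Tendsto (fun m => ((2:ℝ)⁻¹) ^ m) atTop (𝓝 0) :=
    tendsto_pow_atTop_nhds_zero_of_lt_one (by norm_num) (by norm_num)
  have h0 : Tendsto (dSeq N) atTop (𝓝 0) :=
    squeeze_zero (fun m => (dpos hN m).le) hb h2
  rw [tendsto_nhdsWithin_iff]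
  exact ⟨h0, Eventually.of_forall fun m => dpos hN m⟩

lemma dist_le_of_mem_Icell {N : ℕ → ℕ} (hN : ∀ r, 1 < N r) {m : ℕ} {b : ℤ} {y t : ℝ}
    (hy : y ∈ Icell N m b) (ht : t ∈ Icell N m b) : dist y t ≤ dSeq N m := by
  simp only [Icell, mem_Ico] at hy ht
  have hexp : dSeq N m * ((b : ℝ) + 1) = dSeq N m * (b : ℝ) + dSeq N m := by ring
  rw [Real.dist_eq, abs_le]
  constructor <;> linarith [hy.1, hy.2, ht.1, ht.2]

lemma mem_Icell_floor {N : ℕ → ℕ} (hN : ∀ r, 1 < N r) (m : ℕ) (t : ℝ) :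
    t ∈ Icell N m ⌊t / dSeq N m⌋ := by
  have hD := dpos hN m
  simp only [Icell, mem_Ico]
  constructor
  · rw [mul_comm]
    calc ((⌊t / dSeq N m⌋ : ℤ) : ℝ) * dSeq N m ≤ t / dSeq N m * dSeq N m :=
        mul_le_mul_of_nonneg_right (Int.floor_le _) hD.le
      _ = t := div_mul_cancel₀ _ hD.ne'
  · calc t = t / dSeq N m * dSeq N m := (div_mul_cancel₀ _ hD.ne').symm
      _ < (((⌊t / dSeq N m⌋ : ℤ) : ℝ) + 1) * dSeq N m :=
        mul_lt_mul_of_pos_right (Int.lt_floor_add_one _) hD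
      _ = dSeq N m * ((⌊t / dSeq N m⌋ : ℝ) + 1) := by ring

lemma density_bound (hN : ∀ r, 1 < N r) (hi : ∀ r, 1 ≤ i r ∧ i r < N r)
    (hdiv : ¬ Summable (fun r => 1 / (N r : ℝ) ^ 2)) (x : ℝ × ℝ) (m : ℕ) :
    volume (Wset N i ∩ Metric.closedBall x (dSeq N m))
      / volume (Metric.closedBall x (dSeq N m)) ≤ ENNReal.ofReal (39 / 40) := by
  have hD := dpos hN m
  set a : ℤ × ℤ := (⌊x.1 / dSeq N m⌋, ⌊x.2 / dSeq N m⌋) with ha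
  set B := Metric.closedBall x (dSeq N m) with hB
  have hvolB : volume B = ENNReal.ofReal (4 * dSeq N m ^ 2) := by
    rw [hB, ← Prod.mk.eta (p := x), ← closedBall_prod_same, Measure.volume_eq_prod,
      Measure.prod_prod, Real.volume_closedBall, Real.volume_closedBall,
      ← ENNReal.ofReal_mul (by positivity)]
    congr 1
    ring
  have hQB : Qcell N m a ⊆ B := by
    rintro ⟨y1, y2⟩ ⟨hy1, hy2⟩
    rw [hB, Metric.mem_closedBall, Prod.dist_eq]
    have hd1 : dist y1 x.1 ≤ dSeq N m :=
      dist_le_of_mem_Icell hN hy1 (mem_Icell_floor hN m x.1)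
    have hd2 : dist y2 x.2 ≤ dSeq N m :=
      dist_le_of_mem_Icell hN hy2 (mem_Icell_floor hN m x.2)
    exact max_le hd1 hd2
  have hkey := cell_bound hN hi hdiv m a
  have hWB : volume (Wset N i ∩ B) ≤ ENNReal.ofReal ((39 / 10) * dSeq N m ^ 2) := by
    have hdisj : Disjoint (Wset N i ∩ B) ((Wset N i)ᶜ ∩ Qcell N m a) :=
      (disjoint_compl_right).mono inter_subset_left inter_subset_left
    have hmeas2 : MeasurableSet ((Wset N i)ᶜ ∩ Qcell N m a) :=
      (Wmeas (N := N) (i := i)).compl.inter (Qmeas m a)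
    have hun : volume (Wset N i ∩ B) + volume ((Wset N i)ᶜ ∩ Qcell N m a)
        ≤ volume B := by
      rw [← measure_union hdisj hmeas2]
      refine measure_mono (union_subset inter_subset_right ?_)
      exact (inter_subset_right).trans hQB
    have hsplit : ENNReal.ofReal (4 * dSeq N m ^ 2)
        = ENNReal.ofReal ((39 / 10) * dSeq N m ^ 2) + ENNReal.ofReal (dSeq N m ^ 2 / 10) := by
      rw [← ENNReal.ofReal_add (by positivity) (by positivity)]
      congr 1
      ring
    have h2 : volume (Wset N i ∩ B) + ENNReal.ofReal (dSeq N m ^ 2 / 10)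
        ≤ ENNReal.ofReal ((39 / 10) * dSeq N m ^ 2) + ENNReal.ofReal (dSeq N m ^ 2 / 10) := by
      calc volume (Wset N i ∩ B) + ENNReal.ofReal (dSeq N m ^ 2 / 10)
          ≤ volume (Wset N i ∩ B) + volume ((Wset N i)ᶜ ∩ Qcell N m a) :=
            add_le_add le_rfl hkey
        _ ≤ volume B := hun
        _ = _ := by rw [hvolB, hsplit]
    exact (ENNReal.add_le_add_iff_right ENNReal.ofReal_ne_top).1 h2
  have hB0 : volume B ≠ 0 := by
    rw [hvolB, Ne, ENNReal.ofReal_eq_zero, not_le]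
    positivity
  have hBt : volume B ≠ ⊤ := by rw [hvolB]; exact ENNReal.ofReal_ne_top
  rw [ENNReal.div_le_iff_le_mul (Or.inl hB0) (Or.inl hBt)]
  calc volume (Wset N i ∩ B) ≤ ENNReal.ofReal ((39 / 10) * dSeq N m ^ 2) := hWB
    _ = ENNReal.ofReal (39 / 40) * volume B := by
        rw [hvolB, ← ENNReal.ofReal_mul (by positivity)]
        congr 1
        ring

lemma Wzero (hN : ∀ r, 1 < N r) (hi : ∀ r, 1 ≤ i r ∧ i r < N r)
    (hdiv : ¬ Summable (fun r => 1 / (N r : ℝ) ^ 2)) : volume (Wset N i) = 0 := by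
  by_contra hvol
  have hres : volume.restrict (Wset N i) ≠ 0 := by
    intro h
    apply hvol
    have h2 : volume.restrict (Wset N i) Set.univ = volume (Wset N i) :=
      Measure.restrict_apply_univ _
    rw [h] at h2
    simpa using h2.symm
  haveI : (ae (volume.restrict (Wset N i))).NeBot := ae_neBot.mpr hres
  have hae := Besicovitch.ae_tendsto_measure_inter_div volume (Wset N i)
  obtain ⟨x, hx⟩ := hae.exists
  have hcomp := hx.comp (dtend hN)
  have hle : (1 : ℝ≥0∞) ≤ ENNReal.ofReal (39 / 40) :=
    le_of_tendsto' hcomp fun m => density_bound hN hi hdiv x m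
  have hlt : ENNReal.ofReal (39 / 40) < 1 := ENNReal.ofReal_lt_one.2 (by norm_num)
  exact absurd (lt_of_le_of_lt hle hlt) (lt_irrefl _)

end S4

theorem stmt4 (N : ℕ → ℕ) (hN : ∀ r, 1 < N r)
    (hNtend : Filter.Tendsto (fun r => (N r : ℝ)) Filter.atTop Filter.atTop)
    (hdiv : ¬ Summable (fun r => 1 / (N r : ℝ) ^ 2))
    (i : ℕ → ℝ) (hi : SSeq N i) :
    IsClosed (Wset N i) ∧ MeasureTheory.volume (Wset N i) = 0 :=
  ⟨S4.Wclosed, S4.Wzero hN hi.1 hdiv⟩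
end

section
/- For any i, j ∈ 𝔖 with i ≺ j, any ε > 0, and any unit vector e ∈ S¹ with rational slope, there exists δ₀ > 0 such that for every x ∈ W_i and every δ ∈ (0, δ₀), there is a line segment [x', x' + δe] contained in W_j with ‖x' − x‖ ≤ εδ. -/
open Filter

lemma dSeq_pos (N : ℕ → ℕ) (hN : ∀ r, 1 < N r) (r : ℕ) : 0 < dSeq N r := by
  unfold dSeq
  refine inv_pos.mpr (Finset.prod_pos ?_)
  intro k _
  exact_mod_cast Nat.lt_of_lt_of_le Nat.zero_lt_one (hN k).le

lemma dSeq_succ (N : ℕ → ℕ) (r : ℕ) :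
    dSeq N (r+1) = dSeq N r / N r := by
  unfold dSeq
  rw [Finset.prod_range_succ, mul_inv, div_eq_mul_inv]

lemma dSeq_anti (N : ℕ → ℕ) (hN : ∀ r, 1 < N r) : Antitone (dSeq N) := by
  apply antitone_nat_of_succ_le
  intro r
  rw [dSeq_succ]
  apply div_le_self (dSeq_pos N hN r).le
  exact_mod_cast (hN r).le

lemma gapLemma (g ρ c a b : ℝ) (hg : 0 < g) (hρ : 0 ≤ ρ) (hab : a ≤ b) :
    ∃ v : ℝ × ℝ, a ≤ v.1 ∧ v.2 ≤ b ∧ min g (b - a) / 2 - 2*ρ ≤ v.2 - v.1 ∧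
      ∀ t, v.1 ≤ t → t ≤ v.2 → ∀ m : ℤ, ρ ≤ |t - (c + m*g)| := by
  set k : ℤ := ⌊(a - c)/g⌋ + 1 with hk
  have hβ1 : a < c + k*g := by
    have h2 : (a - c)/g < (k:ℝ) := by
      push_cast [hk]; exact Int.lt_floor_add_one ((a - c)/g)
    have h3 := (div_lt_iff₀ hg).mp h2
    linarith
  have hβ2 : c + k*g ≤ a + g := by
    have h2 : ((k:ℝ) - 1) ≤ (a - c)/g := by
      push_cast [hk]
      have := Int.floor_le ((a - c)/g)
      linarith
    have h3 := (le_div_iff₀ hg).mp h2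
    nlinarith
  set β := c + k*g with hβdef
  by_cases hcase : min g (b - a) / 2 ≤ β - a
  · refine ⟨(max a (β - g + ρ), min b (β - ρ)), le_max_left _ _, min_le_left _ _, ?_, ?_⟩
    · have h1 : max a (β - g + ρ) ≤ a + ρ := max_le (by linarith) (by linarith)
      have h2 : a + min (b - a) (β - a) - ρ ≤ min b (β - ρ) := by
        rcases le_total b (β - ρ) with h | h
        · rw [min_eq_left h]
          have := min_le_left (b-a) (β - a); linarith
        · rw [min_eq_right h]
          have := min_le_right (b-a) (β - a); linarith
      have h3 : min g (b-a) / 2 ≤ min (b - a) (β - a) := by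
        rcases le_total (b-a) (β - a) with h | h
        · rw [min_eq_left h]
          have := min_le_right g (b-a); linarith
        · rw [min_eq_right h]; linarith
      simp only
      linarith
    · intro t ht1 ht2 m
      have h1 : β - g + ρ ≤ t := le_trans (le_max_right _ _) ht1
      have h2 : t ≤ β - ρ := le_trans ht2 (min_le_right _ _)
      rcases le_or_gt k m with hm | hm
      · have hm' : (k:ℝ) ≤ (m:ℝ) := by exact_mod_cast hm
        have : β ≤ c + m*g := by nlinarith
        rw [abs_sub_comm, le_abs]; left; linarith
      · have hm' : (m:ℝ) ≤ (k:ℝ) - 1 := by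
          have : m ≤ k - 1 := by omega
          exact_mod_cast this
        have : c + m*g ≤ β - g := by nlinarith
        rw [le_abs]; left; linarith
  · push_neg at hcase
    refine ⟨(max a (β + ρ), min b (β + g - ρ)), le_max_left _ _, min_le_left _ _, ?_, ?_⟩
    · have h1 : max a (β + ρ) = β + ρ := max_eq_right (by linarith)
      have h2 : a + min (b - a) (β - a + g) - ρ ≤ min b (β + g - ρ) := by
        rcases le_total b (β + g - ρ) with h | h
        · rw [min_eq_left h]
          have := min_le_left (b-a) (β - a + g); linarith
        · rw [min_eq_right h]
          have := min_le_right (b-a) (β - a + g); linarith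
      have h3 : min g (b - a) ≤ min (b - a) (β - a + g) := by
        rcases le_total (b-a) (β - a + g) with h | h
        · rw [min_eq_left h]; exact min_le_right _ _
        · rw [min_eq_right h]
          have := min_le_left g (b-a); linarith
      simp only
      rw [h1]
      linarith
    · intro t ht1 ht2 m
      have h1 : β + ρ ≤ t := le_trans (le_max_right _ _) ht1
      have h2 : t ≤ β + g - ρ := le_trans ht2 (min_le_right _ _)
      rcases le_or_gt m k with hm | hm
      · have hm' : (m:ℝ) ≤ (k:ℝ) := by exact_mod_cast hm
        have : c + m*g ≤ β := by nlinarith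
        rw [le_abs]; left; linarith
      · have hm' : (k:ℝ) + 1 ≤ (m:ℝ) := by
          have : k + 1 ≤ m := by omega
          exact_mod_cast this
        have : β + g ≤ c + m*g := by nlinarith
        rw [abs_sub_comm, le_abs]; left; linarith

set_option maxHeartbeats 4000000 in
theorem stmt8 (N : ℕ → ℕ) (hN : ∀ r, 1 < N r)
    (hNtend : Filter.Tendsto (fun r => (N r : ℝ)) Filter.atTop Filter.atTop)
    (i j : ℕ → ℝ) (hi : SSeq N i) (hj : SSeq N j) (hij : Prec i j)
    (ε : ℝ) (hε : 0 < ε) (e : ℝ × ℝ) (he : eNorm e = 1)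
    (hrat : ∃ p q : ℤ, (p, q) ≠ (0, 0) ∧ (p : ℝ) * e.1 = (q : ℝ) * e.2) :
    ∃ δ₀ > 0, ∀ x ∈ Wset N i, ∀ δ ∈ Set.Ioo 0 δ₀,
      ∃ x' : ℝ × ℝ, segment ℝ x' (x' + δ • e) ⊆ Wset N j ∧ eNorm (x' - x) ≤ ε * δ := by
  classical
  obtain ⟨p, q, hpq0, hpe⟩ := hrat
  have hpq : (p : ℝ) ≠ 0 ∨ (q : ℝ) ≠ 0 := by
    by_contra h
    push_neg at h
    obtain ⟨h1, h2⟩ := h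
    exact hpq0 (by
      have hp : p = 0 := by exact_mod_cast h1
      have hq : q = 0 := by exact_mod_cast h2
      simp [hp, hq])
  have hunit : e.1 ^ 2 + e.2 ^ 2 = 1 := by
    have h0 : (0:ℝ) ≤ e.1 ^ 2 + e.2 ^ 2 := by positivity
    have h1 := Real.sq_sqrt h0
    unfold eNorm at he
    rw [he] at h1
    linarith [h1]
  have habs_e1 : |e.1| ≤ 1 := by
    nlinarith [sq_abs e.1, abs_nonneg e.1, sq_nonneg e.2]
  have habs_e2 : |e.2| ≤ 1 := by
    nlinarith [sq_abs e.2, abs_nonneg e.2, sq_nonneg e.1]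
  obtain ⟨sv, hsv1, hsv2⟩ : ∃ s : ℝ, e.1 = s * q ∧ e.2 = s * p := by
    by_cases hq : (q : ℝ) = 0
    · have hp : (p : ℝ) ≠ 0 := by tauto
      have he1 : e.1 = 0 := by
        have : (p:ℝ) * e.1 = 0 := by rw [hpe, hq]; ring
        exact (mul_eq_zero.mp this).resolve_left hp
      exact ⟨e.2 / p, by rw [he1, hq]; ring, by field_simp⟩
    · refine ⟨e.1 / q, by field_simp, ?_⟩
      field_simp
      linarith [hpe]
  obtain ⟨Q, hQdef⟩ : ∃ x : ℝ, x = (p:ℝ)^2 + (q:ℝ)^2 := ⟨_, rfl⟩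
  have hQ1 : 1 ≤ Q := by
    rw [hQdef]
    rcases hpq with hp | hp
    · have : (1:ℝ) ≤ (p:ℝ)^2 := by
        have : p ≠ 0 := by exact_mod_cast hp
        have h1 : 1 ≤ |p| := Int.one_le_abs (by omega)
        have h2 : (1:ℝ) ≤ |(p:ℝ)| := by exact_mod_cast h1
        nlinarith [abs_nonneg (p:ℝ), sq_abs (p:ℝ)]
      nlinarith [sq_nonneg (q:ℝ)]
    · have : (1:ℝ) ≤ (q:ℝ)^2 := by
        have : q ≠ 0 := by exact_mod_cast hp
        have h1 : 1 ≤ |q| := Int.one_le_abs (by omega)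
        have h2 : (1:ℝ) ≤ |(q:ℝ)| := by exact_mod_cast h1
        nlinarith [abs_nonneg (q:ℝ), sq_abs (q:ℝ)]
      nlinarith [sq_nonneg (p:ℝ)]
  obtain ⟨sq, hsqdef⟩ : ∃ x : ℝ, x = Real.sqrt Q := ⟨_, rfl⟩
  have hsq2 : sq ^ 2 = Q := by rw [hsqdef]; exact Real.sq_sqrt (by linarith)
  have hsq0 : 0 < sq := by rw [hsqdef]; exact Real.sqrt_pos.mpr (by linarith)
  have hsq1 : 1 ≤ sq := by nlinarith
  have hs2 : sv ^ 2 * Q = 1 := by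
    rw [hQdef]
    rw [hsv1, hsv2] at hunit
    nlinarith [hunit]
  have habsv : |sv| = 1 / sq := by
    have h1 : (|sv| * sq - 1) * (|sv| * sq + 1) = 0 := by
      nlinarith [sq_abs sv, hsq2, hs2]
    have h2 : 0 ≤ |sv| * sq := mul_nonneg (abs_nonneg _) hsq0.le
    rcases mul_eq_zero.mp h1 with h | h
    · field_simp
      linarith
    · linarith
  have hsvcases : sv = 1 / sq ∨ sv = -(1 / sq) := abs_eq (by positivity) |>.mp habsv
  obtain ⟨K, hKdef⟩ : ∃ x : ℝ, x = |(p:ℝ)| + |(q:ℝ)| := ⟨_, rfl⟩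
  have hK1 : 1 ≤ K := by
    have h1 : Q ≤ K ^ 2 := by
      rw [hKdef, hQdef]
      nlinarith [sq_abs (p:ℝ), sq_abs (q:ℝ), abs_nonneg (p:ℝ), abs_nonneg (q:ℝ),
        mul_nonneg (abs_nonneg (p:ℝ)) (abs_nonneg (q:ℝ))]
    nlinarith [abs_nonneg (p:ℝ), abs_nonneg (q:ℝ), hKdef]
  have hK0 : 0 < K := by linarith
  obtain ⟨ε', hε'def⟩ : ∃ x : ℝ, x = min ε 1 := ⟨_, rfl⟩
  have hε'0 : 0 < ε' := by rw [hε'def]; exact lt_min hε one_pos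
  have hε'1 : ε' ≤ 1 := by rw [hε'def]; exact min_le_right _ _
  have hε'ε : ε' ≤ ε := by rw [hε'def]; exact min_le_left _ _
  obtain ⟨τ, hτdef⟩ : ∃ x : ℝ, x = ε' * sq / (32 * K) := ⟨_, rfl⟩
  have hτ0 : 0 < τ := by
    rw [hτdef]
    exact div_pos (mul_pos hε'0 hsq0) (by linarith)
  -- thresholds
  obtain ⟨R, hR⟩ : ∃ R : ℕ, ∀ s, R ≤ s →
      (4 ≤ (N s : ℝ)) ∧ (16 * K * j s ≤ (N s : ℝ)) ∧
      (j s ≤ τ * (i s - j s)) ∧ (32 / (ε' * sq) ≤ i s - j s) := by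
    have h1 : ∀ᶠ s in atTop, 4 ≤ (N s : ℝ) := hNtend.eventually_ge_atTop 4
    have h2 : ∀ᶠ s in atTop, j s / (N s : ℝ) < 1 / (16 * K) :=
      hj.2.eventually_lt_const (by positivity : (0:ℝ) < 1 / (16 * K))
    have h3 : ∀ᶠ s in atTop,
        max (1 + 1 / τ) (1 + 32 / (ε' * sq)) ≤ i s / j s :=
      hij.2.eventually_ge_atTop _
    have hall := (h1.and h2).and h3
    rw [Filter.eventually_atTop] at hall
    obtain ⟨R, hRR⟩ := hall
    refine ⟨R, fun s hs => ?_⟩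
    obtain ⟨⟨hs1, hs2⟩, hs3⟩ := hRR s hs
    have hjs1 : 1 ≤ j s := (hj.1 s).1
    have hNs0 : (0:ℝ) < (N s : ℝ) := by linarith
    have hT2 : 16 * K * j s ≤ (N s : ℝ) := by
      have h6 := (div_lt_iff₀ hNs0).mp hs2
      have h8 : (16*K)*(j s) < (16*K)*(1/(16*K)*(N s:ℝ)) :=
        mul_lt_mul_of_pos_left h6 (by linarith)
      have h9 : (16*K)*(1/(16*K)*(N s:ℝ)) = (N s:ℝ) := by
        field_simp
      linarith
    have hmax1 : (1 + 1 / τ) ≤ i s / j s := le_trans (le_max_left _ _) hs3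
    have hmax2 : (1 + 32 / (ε' * sq)) ≤ i s / j s := le_trans (le_max_right _ _) hs3
    have hi1 : (1 + 1 / τ) * j s ≤ i s := by
      rw [← le_div_iff₀ (by linarith : (0:ℝ) < j s)]
      exact hmax1
    have hi2 : (1 + 32 / (ε' * sq)) * j s ≤ i s := by
      rw [← le_div_iff₀ (by linarith : (0:ℝ) < j s)]
      exact hmax2
    refine ⟨hs1, hT2, ?_, ?_⟩
    · have h4 : j s / τ ≤ i s - j s := by
        have h5 : j s + j s * (1/τ) ≤ i s := by nlinarith
        have h6 : j s * (1/τ) = j s / τ := by ring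
        linarith [h6 ▸ h5]
      calc j s = τ * (j s / τ) := by field_simp
      _ ≤ τ * (i s - j s) := mul_le_mul_of_nonneg_left h4 hτ0.le
    · have h4 : 32 / (ε' * sq) * j s ≤ i s - j s := by nlinarith
      have h5 : 32 / (ε' * sq) ≤ 32 / (ε' * sq) * j s := by
        nlinarith [div_nonneg (by norm_num : (0:ℝ) ≤ 32) (by positivity : (0:ℝ) ≤ ε' * sq)]
      linarith
  -- δ₀
  obtain ⟨δ₀, hδ₀def⟩ : ∃ x : ℝ, x = (Finset.range (R+1)).inf'
      ⟨0, Finset.mem_range.mpr (Nat.succ_pos R)⟩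
      (fun s => (i s - j s) * dSeq N (s+1) / 4) := ⟨_, rfl⟩
  have hδ₀pos : 0 < δ₀ := by
    rw [hδ₀def]
    apply (Finset.lt_inf'_iff _).mpr
    intro s _
    have h1 : 0 < i s - j s := by linarith [hij.1 s]
    have h2 := dSeq_pos N hN (s+1)
    positivity
  refine ⟨δ₀, hδ₀pos, ?_⟩
  intro x hx δ hδIoo
  obtain ⟨hδ0, hδlt⟩ := hδIoo
  simp only [Wset, Set.mem_setOf_eq] at hx
  have hfreelow : ∀ s, s ≤ R → 4*δ ≤ (i s - j s) * dSeq N (s+1) := by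
    intro s hs
    have h1 : δ₀ ≤ (i s - j s) * dSeq N (s+1) / 4 := by
      rw [hδ₀def]
      exact Finset.inf'_le _ (Finset.mem_range.mpr (by omega))
    linarith
  have hdpos : ∀ r, 0 < dSeq N r := dSeq_pos N hN
  have hglpos : ∀ r, 0 < dSeq N r / sq := fun r => div_pos (hdpos r) hsq0
  have hρlpos : ∀ r, 0 ≤ K * (j r * dSeq N (r+1)) / (2*sq) := by
    intro r
    have hjr := (hj.1 r).1
    have := (hdpos (r+1)).le
    apply div_nonneg _ (by linarith)
    apply mul_nonneg hK0.le
    apply mul_nonneg (by linarith) this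
  have hdivsq : ∀ a b : ℝ, a ≤ b → a / sq ≤ b / sq := by
    intro a b h
    rw [div_le_div_iff₀ hsq0 hsq0]
    exact mul_le_mul_of_nonneg_right h hsq0.le
  obtain ⟨nx, hnxdef⟩ : ∃ w : ℝ, w = e.1 * x.2 - e.2 * x.1 := ⟨_, rfl⟩
  -- the recursively chosen nested intervals
  obtain ⟨I, hI0, hIstep⟩ : ∃ I : ℕ → ℝ × ℝ, I 0 = (-(ε'*δ), ε'*δ) ∧ ∀ u : ℕ,
      I (u+1) = dite (¬ (4*δ ≤ (i u - j u) * dSeq N (u+1)) ∧ (I u).1 ≤ (I u).2)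
        (fun h => (gapLemma (dSeq N u / sq) (K * (j u * dSeq N (u+1)) / (2*sq))
          (sv * dSeq N u * (((q:ℝ) - (p:ℝ))/2) - nx) (I u).1 (I u).2
          (hglpos u) (hρlpos u) h.2).choose)
        (fun _ => I u) :=
    ⟨fun u => Nat.rec (motive := fun _ => ℝ × ℝ) (-(ε'*δ), ε'*δ)
      (fun s ab => dite (¬ (4*δ ≤ (i s - j s) * dSeq N (s+1)) ∧ ab.1 ≤ ab.2)
        (fun h => (gapLemma (dSeq N s / sq) (K * (j s * dSeq N (s+1)) / (2*sq))
          (sv * dSeq N s * (((q:ℝ) - (p:ℝ))/2) - nx) ab.1 ab.2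
          (hglpos s) (hρlpos s) h.2).choose)
        (fun _ => ab)) u, rfl, fun u => rfl⟩
  have hfree : ∀ u, (4*δ ≤ (i u - j u) * dSeq N (u+1)) → I (u+1) = I u := by
    intro u hf
    rw [hIstep u, dif_neg]
    rintro ⟨h1, -⟩
    exact h1 hf
  have hrel : ∀ u, ¬ (4*δ ≤ (i u - j u) * dSeq N (u+1)) → (I u).1 ≤ (I u).2 →
      (I u).1 ≤ (I (u+1)).1 ∧ (I (u+1)).2 ≤ (I u).2 ∧
      min (dSeq N u / sq) ((I u).2 - (I u).1) / 2 - 2*(K * (j u * dSeq N (u+1)) / (2*sq))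
        ≤ (I (u+1)).2 - (I (u+1)).1 ∧
      ∀ t, (I (u+1)).1 ≤ t → t ≤ (I (u+1)).2 → ∀ m : ℤ,
        K * (j u * dSeq N (u+1)) / (2*sq) ≤
          |t - ((sv * dSeq N u * (((q:ℝ) - (p:ℝ))/2) - nx) + m * (dSeq N u / sq))| := by
    intro u hf hab
    have hEq : I (u+1) = (gapLemma (dSeq N u / sq) (K * (j u * dSeq N (u+1)) / (2*sq))
          (sv * dSeq N u * (((q:ℝ) - (p:ℝ))/2) - nx) (I u).1 (I u).2
          (hglpos u) (hρlpos u) hab).choose := by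
      rw [hIstep u, dif_pos ⟨hf, hab⟩]
    have hspec := (gapLemma (dSeq N u / sq) (K * (j u * dSeq N (u+1)) / (2*sq))
          (sv * dSeq N u * (((q:ℝ) - (p:ℝ))/2) - nx) (I u).1 (I u).2
          (hglpos u) (hρlpos u) hab).choose_spec
    rw [← hEq] at hspec
    exact hspec
  -- the invariant
  have hINV : ∀ u, (I u = (-(ε'*δ), ε'*δ) ∨
      (8 * (dSeq N u / sq) ≤ ε'*δ ∧ dSeq N u / sq ≤ 4 * ((I u).2 - (I u).1))) := by
    intro u
    induction u with
    | zero => exact Or.inl hI0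
    | succ u ih =>
      have hab : (I u).1 ≤ (I u).2 := by
        rcases ih with h | h
        · rw [h]
          show -(ε'*δ) ≤ ε'*δ
          linarith [mul_pos hε'0 hδ0]
        · linarith [hglpos u, h.2]
      have hG1leG0 : dSeq N (u+1)/sq ≤ dSeq N u/sq :=
        hdivsq _ _ (dSeq_anti N hN (Nat.le_succ u))
      by_cases hfr : 4*δ ≤ (i u - j u) * dSeq N (u+1)
      · have hEq := hfree u hfr
        rcases ih with h | h
        · exact Or.inl (hEq.trans h)
        · right
          rw [hEq]
          exact ⟨by linarith [h.1], by linarith [h.2]⟩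
      · -- relevant level u
        have hRu : R ≤ u := by
          by_contra hc
          push_neg at hc
          exact hfr (hfreelow u (by omega))
        obtain ⟨hN4, hT2, hT3, hT4⟩ := hR u hRu
        obtain ⟨hs1, hs2, hs3, hs4⟩ := hrel u hfr hab
        push_neg at hfr
        have hdu1 : dSeq N (u+1) = dSeq N u / (N u) := dSeq_succ N u
        have hdp := hdpos u
        have hdp1 := hdpos (u+1)
        have hjs1 : 1 ≤ j u := (hj.1 u).1
        have hNu0 : (0:ℝ) < (N u : ℝ) := by linarith
        have hNd : (N u : ℝ) * dSeq N (u+1) = dSeq N u := by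
          rw [hdu1]; field_simp
        -- 8 * g_{u+1} ≤ ε'δ
        have hgnext : 8 * (dSeq N (u+1) / sq) ≤ ε' * δ := by
          have h1 : (32/(ε'*sq)) * dSeq N (u+1) ≤ (i u - j u) * dSeq N (u+1) :=
            mul_le_mul_of_nonneg_right hT4 hdp1.le
          have h2 : (32/(ε'*sq)) * dSeq N (u+1) < 4*δ := lt_of_le_of_lt h1 hfr
          have h3 : 0 < ε'*sq := mul_pos hε'0 hsq0
          have h4 : (32/(ε'*sq)) * dSeq N (u+1) = 32 * dSeq N (u+1) / (ε'*sq) := by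
            ring
          rw [h4, div_lt_iff₀ h3] at h2
          have h5 : 8 * (dSeq N (u+1) / sq) = 8 * dSeq N (u+1) / sq := by ring
          rw [h5, div_le_iff₀ hsq0]
          linarith
        -- 16ρ ≤ ε'δ
        have hrho1 : 16 * (K * (j u * dSeq N (u+1)) / (2*sq)) ≤ ε' * δ := by
          have ha : j u * dSeq N (u+1) ≤ (τ * (i u - j u)) * dSeq N (u+1) :=
            mul_le_mul_of_nonneg_right hT3 hdp1.le
          have hb : τ * ((i u - j u) * dSeq N (u+1)) ≤ τ * (4*δ) :=
            mul_le_mul_of_nonneg_left hfr.le hτ0.le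
          have hc : j u * dSeq N (u+1) ≤ 4*(τ*δ) := by linarith
          have hd : 8*(K*(4*(τ*δ))) = ε'*δ*sq := by
            rw [hτdef]; field_simp; ring
          have heq : 16 * (K * (j u * dSeq N (u+1)) / (2*sq))
              = 8*(K*(j u * dSeq N (u+1))) / sq := by
            field_simp; ring
          have hc8 : 8*K*(j u * dSeq N (u+1)) ≤ 8*K*(4*(τ*δ)) :=
            mul_le_mul_of_nonneg_left hc (by linarith : (0:ℝ) ≤ 8*K)
          rw [heq, div_le_iff₀ hsq0]
          linarith
        -- 32ρ ≤ g_u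
        have hrho2 : 32 * (K * (j u * dSeq N (u+1)) / (2*sq)) ≤ dSeq N u / sq := by
          have h16 : 16 * (K * (j u * dSeq N (u+1))) ≤ dSeq N u := by
            have h1 := mul_le_mul_of_nonneg_right hT2 hdp1.le
            linarith [hNd]
          have heq : 32 * (K * (j u * dSeq N (u+1)) / (2*sq))
              = 16*(K*(j u * dSeq N (u+1))) / sq := by
            field_simp; ring
          rw [heq]
          exact hdivsq _ _ h16
        -- 4 g_{u+1} ≤ g_u
        have hG14 : 4 * (dSeq N (u+1)/sq) ≤ dSeq N u/sq := by
          have h1 : 4 * dSeq N (u+1) ≤ dSeq N u := by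
            have h2 := mul_le_mul_of_nonneg_right hN4 hdp1.le
            linarith [hNd]
          have heq : 4 * (dSeq N (u+1)/sq) = 4 * dSeq N (u+1) / sq := by ring
          rw [heq]
          exact hdivsq _ _ h1
        right
        refine ⟨hgnext, ?_⟩
        rcases ih with h | h
        · have hl1 : (I u).1 = -(ε'*δ) := by rw [h]
          have hl2 : (I u).2 = ε'*δ := by rw [h]
          rw [hl1, hl2] at hs3
          have hlen : ε'*δ - -(ε'*δ) = 2*(ε'*δ) := by ring
          rw [hlen] at hs3
          rcases le_total (dSeq N u / sq) (2*(ε'*δ)) with hgc | hgc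
          · rw [min_eq_left hgc] at hs3
            linarith [hglpos (u+1), hglpos u]
          · rw [min_eq_right hgc] at hs3
            linarith [hglpos (u+1), hglpos u]
        · obtain ⟨hA1, hA2⟩ := h
          rcases le_total (dSeq N u / sq) ((I u).2 - (I u).1) with hgc | hgc
          · rw [min_eq_left hgc] at hs3
            linarith [hglpos (u+1), hglpos u]
          · rw [min_eq_right hgc] at hs3
            linarith [hglpos (u+1), hglpos u]
  have hIab : ∀ u, (I u).1 ≤ (I u).2 := by
    intro u
    rcases hINV u with h | h
    · rw [h]
      show -(ε'*δ) ≤ ε'*δ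
      linarith [mul_pos hε'0 hδ0]
    · linarith [hglpos u, h.2]
  have hstep12 : ∀ u, (I u).1 ≤ (I (u+1)).1 ∧ (I (u+1)).2 ≤ (I u).2 := by
    intro u
    by_cases hfr : 4*δ ≤ (i u - j u) * dSeq N (u+1)
    · rw [hfree u hfr]
      exact ⟨le_refl _, le_refl _⟩
    · obtain ⟨h1, h2, -, -⟩ := hrel u hfr (hIab u)
      exact ⟨h1, h2⟩
  have hmonoa : Monotone (fun u => (I u).1) :=
    monotone_nat_of_le_succ (fun u => (hstep12 u).1)
  have hantib : Antitone (fun u => (I u).2) :=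
    antitone_nat_of_succ_le (fun u => (hstep12 u).2)
  have hbdd : BddAbove (Set.range fun u => (I u).1) := by
    refine ⟨(I 0).2, ?_⟩
    rintro _ ⟨u, rfl⟩
    exact le_trans (hIab u) (hantib (Nat.zero_le u))
  obtain ⟨t, htdef⟩ : ∃ w : ℝ, w = ⨆ u, (I u).1 := ⟨_, rfl⟩
  have hta : ∀ u, (I u).1 ≤ t := by
    intro u
    rw [htdef]
    exact le_ciSup hbdd u
  have htb : ∀ u, t ≤ (I u).2 := by
    intro u
    rw [htdef]
    apply ciSup_le
    intro v
    rcases le_total v u with h | h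
    · exact le_trans (hmonoa h) (hIab u)
    · exact le_trans (hIab v) (hantib h)
  have habs_t : |t| ≤ ε'*δ := by
    rw [abs_le]
    constructor
    · have h1 := hta 0
      rw [hI0] at h1
      exact h1
    · have h1 := htb 0
      rw [hI0] at h1
      exact h1
  refine ⟨x + t • ((-e.2, e.1) : ℝ × ℝ), ?_, ?_⟩
  · -- segment containment
    intro y hy
    rw [segment_eq_image'] at hy
    obtain ⟨θ, hθmem, hyeq⟩ := hy
    obtain ⟨hθ0, hθ1⟩ := hθmem
    have hy1 : y.1 = x.1 - t*e.2 + (θ*δ)*e.1 := by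
      rw [← hyeq]
      simp [Prod.smul_def, smul_eq_mul]
      ring
    have hy2 : y.2 = x.2 + t*e.1 + (θ*δ)*e.2 := by
      rw [← hyeq]
      simp [Prod.smul_def, smul_eq_mul]
      ring
    have hu'0 : 0 ≤ θ*δ := mul_nonneg hθ0 hδ0.le
    have hu'1 : θ*δ ≤ δ := by
      linarith [mul_le_mul_of_nonneg_right hθ1 hδ0.le]
    simp only [Wset, Set.mem_setOf_eq]
    intro r z hcon
    obtain ⟨hA, hB⟩ := hcon
    by_cases hfr : 4*δ ≤ (i r - j r) * dSeq N (r+1)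
    · -- free level: use that x is far from the level-r lattice
      have hxw := hx r z
      rw [not_and_or] at hxw
      have htd : |t| ≤ δ :=
        le_trans habs_t (by linarith [mul_le_mul_of_nonneg_right hε'1 hδ0.le])
      have hyd1 : |y.1 - x.1| ≤ 2*δ := by
        have h1 : y.1 - x.1 = t*(-e.2) + (θ*δ)*e.1 := by rw [hy1]; ring
        rw [h1]
        calc |t*(-e.2) + (θ*δ)*e.1| ≤ |t*(-e.2)| + |(θ*δ)*e.1| := abs_add_le _ _
        _ = |t| *|e.2| + (θ*δ)*|e.1| := by
            rw [abs_mul, abs_mul, abs_neg, abs_of_nonneg hu'0]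
        _ ≤ δ*1 + δ*1 := by
            apply add_le_add
            · exact mul_le_mul htd habs_e2 (abs_nonneg _) hδ0.le
            · exact mul_le_mul hu'1 habs_e1 (abs_nonneg _) hδ0.le
        _ = 2*δ := by ring
      have hyd2 : |y.2 - x.2| ≤ 2*δ := by
        have h1 : y.2 - x.2 = t*e.1 + (θ*δ)*e.2 := by rw [hy2]; ring
        rw [h1]
        calc |t*e.1 + (θ*δ)*e.2| ≤ |t*e.1| + |(θ*δ)*e.2| := abs_add_le _ _
        _ = |t| *|e.1| + (θ*δ)*|e.2| := by
            rw [abs_mul, abs_mul, abs_of_nonneg hu'0]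
        _ ≤ δ*1 + δ*1 := by
            apply add_le_add
            · exact mul_le_mul htd habs_e1 (abs_nonneg _) hδ0.le
            · exact mul_le_mul hu'1 habs_e2 (abs_nonneg _) hδ0.le
        _ = 2*δ := by ring
      rcases hxw with hxa | hxb
      · push_neg at hxa
        have htri := abs_sub_le x.1 y.1 (dSeq N r * (1 / 2 + (z.1 : ℝ)))
        have hcomm : |x.1 - y.1| = |y.1 - x.1| := abs_sub_comm _ _
        linarith
      · push_neg at hxb
        have htri := abs_sub_le x.2 y.2 (dSeq N r * (1 / 2 + (z.2 : ℝ)))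
        have hcomm : |x.2 - y.2| = |y.2 - x.2| := abs_sub_comm _ _
        linarith
    · -- relevant level: use the avoidance property of the chosen interval
      have hspec := (hrel r hfr (hIab r)).2.2.2
      have hsd : sv * dSeq N r = dSeq N r / sq ∨ sv * dSeq N r = -(dSeq N r / sq) := by
        rcases hsvcases with h | h
        · left; rw [h]; field_simp
        · right; rw [h]; field_simp
      obtain ⟨m, hm⟩ : ∃ m : ℤ,
          (-e.2)*(dSeq N r * (1 / 2 + (z.1 : ℝ))) + e.1*(dSeq N r * (1 / 2 + (z.2 : ℝ))) - nx
          = (sv * dSeq N r * (((q:ℝ) - (p:ℝ))/2) - nx) + m * (dSeq N r / sq) := by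
        rcases hsd with h | h
        · refine ⟨q * z.2 - p * z.1, ?_⟩
          push_cast
          rw [hsv1, hsv2]
          linear_combination ((q:ℝ)*(z.2:ℝ) - (p:ℝ)*(z.1:ℝ)) * h
        · refine ⟨-(q * z.2 - p * z.1), ?_⟩
          push_cast
          rw [hsv1, hsv2]
          linear_combination ((q:ℝ)*(z.2:ℝ) - (p:ℝ)*(z.1:ℝ)) * h
      have hny : (-e.2)*y.1 + e.1*y.2 = nx + t := by
        rw [hy1, hy2, hnxdef]
        linear_combination t * hunit
      have hlt : |t - ((sv * dSeq N r * (((q:ℝ) - (p:ℝ))/2) - nx) + m * (dSeq N r / sq))|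
          < K * (j r * dSeq N (r+1)) / (2*sq) := by
        have hrw : t - ((sv * dSeq N r * (((q:ℝ) - (p:ℝ))/2) - nx) + m * (dSeq N r / sq))
            = (-e.2)*(y.1 - dSeq N r * (1 / 2 + (z.1 : ℝ)))
              + e.1*(y.2 - dSeq N r * (1 / 2 + (z.2 : ℝ))) := by
          linear_combination hm - hny
        rw [hrw]
        have he1q : |e.1| = |(q:ℝ)|/sq := by
          rw [hsv1, abs_mul, habsv]; ring
        have he2p : |e.2| = |(p:ℝ)|/sq := by
          rw [hsv2, abs_mul, habsv]; ring
        have htri : |(-e.2)*(y.1 - dSeq N r * (1 / 2 + (z.1 : ℝ)))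
              + e.1*(y.2 - dSeq N r * (1 / 2 + (z.2 : ℝ)))|
            ≤ |e.2| *|y.1 - dSeq N r * (1 / 2 + (z.1 : ℝ))|
              + |e.1| *|y.2 - dSeq N r * (1 / 2 + (z.2 : ℝ))| := by
          calc |(-e.2)*(y.1 - dSeq N r * (1 / 2 + (z.1 : ℝ)))
              + e.1*(y.2 - dSeq N r * (1 / 2 + (z.2 : ℝ)))|
              ≤ |(-e.2)*(y.1 - dSeq N r * (1 / 2 + (z.1 : ℝ)))|
                + |e.1*(y.2 - dSeq N r * (1 / 2 + (z.2 : ℝ)))| := abs_add_le _ _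
          _ = |e.2| *|y.1 - dSeq N r * (1 / 2 + (z.1 : ℝ))|
                + |e.1| *|y.2 - dSeq N r * (1 / 2 + (z.2 : ℝ))| := by
              rw [abs_mul, abs_mul, abs_neg]
        have hsum : (|e.2| + |e.1|) * (j r * dSeq N (r+1) / 2)
            = K * (j r * dSeq N (r+1)) / (2*sq) := by
          rw [he1q, he2p, hKdef]
          ring
        have hl20 : 0 < j r * dSeq N (r+1) / 2 := by
          have := (hj.1 r).1
          have := hdpos (r+1)
          positivity
        have hepos : 0 < |e.1| ∨ 0 < |e.2| := by
          by_contra hcon2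
          push_neg at hcon2
          obtain ⟨hc1, hc2⟩ := hcon2
          have h1 : e.1 = 0 := abs_nonpos_iff.mp hc1
          have h2 : e.2 = 0 := abs_nonpos_iff.mp hc2
          rw [h1, h2] at hunit
          norm_num at hunit
        rcases hepos with hp1 | hp2
        · have hterm2 : |e.1| *|y.2 - dSeq N r * (1 / 2 + (z.2 : ℝ))|
              < |e.1| *(j r * dSeq N (r+1) / 2) := by
            apply mul_lt_mul_of_pos_left hB hp1
          have hterm1 : |e.2| *|y.1 - dSeq N r * (1 / 2 + (z.1 : ℝ))|
              ≤ |e.2| *(j r * dSeq N (r+1) / 2) :=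
            mul_le_mul_of_nonneg_left hA.le (abs_nonneg _)
          linarith [htri, hsum]
        · have hterm1 : |e.2| *|y.1 - dSeq N r * (1 / 2 + (z.1 : ℝ))|
              < |e.2| *(j r * dSeq N (r+1) / 2) := by
            apply mul_lt_mul_of_pos_left hA hp2
          have hterm2 : |e.1| *|y.2 - dSeq N r * (1 / 2 + (z.2 : ℝ))|
              ≤ |e.1| *(j r * dSeq N (r+1) / 2) :=
            mul_le_mul_of_nonneg_left hB.le (abs_nonneg _)
          linarith [htri, hsum]
      have hge := hspec t (hta (r+1)) (htb (r+1)) m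
      linarith
  · -- the distance bound
    have hdiff : (x + t • ((-e.2, e.1) : ℝ × ℝ)) - x = (t*(-e.2), t*e.1) := by
      ext
      · simp [smul_eq_mul]
      · simp [smul_eq_mul]
    have hnormval : eNorm ((x + t • ((-e.2, e.1) : ℝ × ℝ)) - x) = |t| := by
      rw [hdiff]
      unfold eNorm
      have hval : ((t*(-e.2), t*e.1) : ℝ × ℝ).1 ^ 2 + ((t*(-e.2), t*e.1) : ℝ × ℝ).2 ^ 2
          = t^2 := by
        show (t*(-e.2))^2 + (t*e.1)^2 = t^2
        linear_combination t^2 * hunit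
      rw [hval, Real.sqrt_sq_eq_abs]
    rw [hnormval]
    calc |t| ≤ ε'*δ := habs_t
    _ ≤ ε*δ := mul_le_mul_of_nonneg_right hε'ε hδ0.le
end
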